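/- Let F_q be a finite field, H_A ∈ F_q^{m_A×n_A}, H_B ∈ F_q^{m_B×n_B} with ker H_A ≠ 0, ker H_B ≠ 0, ker H_Aᵀ ≠ 0, ker H_Bᵀ ≠ 0, and let H_X = [I_{m_A} ⊗ H_B | H_A ⊗ I_{m_B}], H_Z = [H_Aᵀ ⊗ I_{n_B} | −I_{n_A} ⊗ H_Bᵀ]. Set d_A = min{wt(v) : v ∈ ker H_A, v ≠ 0}, d_Aᵀ = min{wt(v) : v ∈ ker H_Aᵀ, v ≠ 0}, and similarly d_B, d_Bᵀ. Then: (1) every w ∈ ker H_X with wt(w) < min{d_A, d_B} lies in rowspace(H_Z); and (2) every w ∈ ker H_Z with wt(w) < min{d_Aᵀ, d_Bᵀ} lies in rowspace(H_X). Consequently, the distance of the qudit hypergraph product code satisfies d ≥ min{d_A, d_Aᵀ, d_B, d_Bᵀ}. -/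

import Mathlib

open Matrix Kronecker

private lemma hgp_supp_le {F : Type*} [DecidableEq F] [Zero F]
    {α β γ : Type*} [Fintype α] [Fintype β]
    (v : α → F) (w : β → F) (g : α → γ → β)
    (hg : ∀ i b i' b', g i b = g i' b' → i = i')
    (hsupp : ∀ i, v i ≠ 0 → ∃ b, w (g i b) ≠ 0) (hv : v ≠ 0) :
    hammingNorm v ≤ hammingNorm w := by
  classical
  have hex : ∃ i, v i ≠ 0 := by
    by_contra h
    push_neg at h
    exact hv (funext h)
  obtain ⟨i₀, hi₀⟩ := hex
  have hne : Nonempty γ := ⟨(hsupp i₀ hi₀).choose⟩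
  set f : α → β := fun i =>
    g i (if h : ∃ b, w (g i b) ≠ 0 then h.choose else Classical.arbitrary γ) with hf
  apply Finset.card_le_card_of_injOn f
  · intro i hi
    rw [Finset.mem_coe, Finset.mem_filter] at hi ⊢
    refine ⟨Finset.mem_univ _, ?_⟩
    have h := hsupp i hi.2
    simp only [hf, dif_pos h]
    exact h.choose_spec
  · intro i _ i' _ h
    exact hg _ _ _ _ h

private lemma hgp_core {F : Type*} [Field F] {mA nA mB nB : ℕ}
    (HA : Matrix (Fin mA) (Fin nA) F) (HB : Matrix (Fin mB) (Fin nB) F)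
    (M : Matrix (Fin mA) (Fin nB) F) (N : Matrix (Fin nA) (Fin mB) F)
    (heq : M * HBᵀ + HA * N = 0)
    (hA' : ∀ v : Fin nA → F, HA.mulVec v = 0 → (∀ i, v i ≠ 0 → ∃ b, N i b ≠ 0) → v = 0)
    (hB' : ∀ v : Fin nB → F, HB.mulVec v = 0 → (∀ j, v j ≠ 0 → ∃ a, M a j ≠ 0) → v = 0) :
    ∃ C : Matrix (Fin nA) (Fin nB) F, HA * C = M ∧ C * HBᵀ = -N := by
  classical
  set U : Submodule F (Fin nA → F) :=
    { carrier := {v | ∀ i, v i ≠ 0 → ∃ b, N i b ≠ 0}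
      add_mem' := by
        intro x y hx hy i hi
        rcases eq_or_ne (x i) 0 with h | h
        · refine hy i ?_
          intro h'
          simp only [Pi.add_apply, h, h', add_zero] at hi
          exact hi rfl
        · exact hx i h
      zero_mem' := by intro i hi; simp at hi
      smul_mem' := by
        intro cc x hx i hi
        refine hx i ?_
        intro h
        simp [h] at hi } with hU
  set W : Submodule F (Fin mA → F) := U.map HA.mulVecLin with hW
  have hMHB : ∀ b, (fun a => (M * HBᵀ) a b) ∈ W := by
    intro b
    refine ⟨fun i => -N i b, fun i hi => ⟨b, fun h => hi (by simp [h])⟩, ?_⟩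
    funext a
    have h := congr_fun (congr_fun heq a) b
    simp only [Matrix.add_apply, Matrix.zero_apply] at h
    have h2 : HA.mulVecLin (fun i => -N i b) a = -(HA * N) a b := by
      simp only [Matrix.mulVecLin_apply, Matrix.mulVec, dotProduct, Matrix.mul_apply,
        mul_neg, Finset.sum_neg_distrib]
    rw [h2]
    exact neg_eq_of_add_eq_zero_left h
  have colM : ∀ j, (fun a => M a j) ∈ W := by
    intro j
    have hq : ∀ φ : Module.Dual F ((Fin mA → F) ⧸ W), φ (W.mkQ fun a => M a j) = 0 := by
      intro φ
      set L : (Fin mA → F) →ₗ[F] F := φ.comp W.mkQ with hL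
      set v : Fin nB → F := fun j' => L fun a => M a j' with hv
      have hker : HB.mulVec v = 0 := by
        funext b
        have e1 : HB.mulVec v b = L (∑ j', HB b j' • fun a => M a j') := by
          rw [map_sum]
          simp only [_root_.map_smul, smul_eq_mul]
          simp [Matrix.mulVec, dotProduct, hv]
        have e2 : (∑ j', HB b j' • fun a => M a j') = fun a => (M * HBᵀ) a b := by
          funext a
          simp only [Finset.sum_apply, Pi.smul_apply, smul_eq_mul, Matrix.mul_apply,
            Matrix.transpose_apply]
          exact Finset.sum_congr rfl fun j' _ => mul_comm _ _
        have e3 : W.mkQ (fun a => (M * HBᵀ) a b) = 0 := by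
          rw [Submodule.mkQ_apply, Submodule.Quotient.mk_eq_zero]
          exact hMHB b
        rw [e1, e2, hL, LinearMap.comp_apply, e3, map_zero]
        simp
      have hv0 : v = 0 := by
        refine hB' v hker ?_
        intro j' hj'
        by_contra hall
        push_neg at hall
        refine hj' ?_
        have hcol : (fun a => M a j') = 0 := funext fun a => hall a
        rw [hv]
        simp only [hcol, map_zero]
      have := congr_fun hv0 j
      simpa [hv, hL] using this
    have := (Module.forall_dual_apply_eq_zero_iff F _).mp hq
    rwa [Submodule.mkQ_apply, Submodule.Quotient.mk_eq_zero] at this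
  choose c hcU hc using fun j => Submodule.mem_map.mp (colM j)
  set C : Matrix (Fin nA) (Fin nB) F := Matrix.of fun i j => c j i with hCdef
  have h1 : HA * C = M := by
    ext a j
    have := congr_fun (hc j) a
    simpa [Matrix.mul_apply, Matrix.mulVecLin_apply, Matrix.mulVec, dotProduct,
      hCdef] using this
  have hm : HA * (C * HBᵀ + N) = 0 := by
    rw [Matrix.mul_add, ← Matrix.mul_assoc, h1, heq]
  have h2 : ∀ b, (fun i => (C * HBᵀ) i b + N i b) = 0 := by
    intro b
    refine hA' _ ?_ ?_
    · funext a
      have hh := congr_fun (congr_fun hm a) b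
      simpa [Matrix.mulVec, dotProduct, Matrix.mul_apply, Matrix.add_apply,
        Finset.mul_sum, mul_add] using hh
    · intro i hi
      by_cases hNib : N i b ≠ 0
      · exact ⟨b, hNib⟩
      push_neg at hNib
      have hC : (C * HBᵀ) i b ≠ 0 := by
        intro h
        exact hi (by simp [h, hNib])
      rw [Matrix.mul_apply] at hC
      obtain ⟨j, -, hj⟩ := Finset.exists_ne_zero_of_sum_ne_zero hC
      refine hcU j i ?_
      intro h
      rw [hCdef] at hj
      simp only [Matrix.of_apply] at hj
      exact hj (by rw [h, zero_mul])
  refine ⟨C, h1, ?_⟩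
  ext i b
  have := congr_fun (h2 b) i
  simp only [Pi.zero_apply] at this
  simp only [Matrix.neg_apply]
  exact eq_neg_of_add_eq_zero_left this
theorem hgp_distance_lower_bound
    {F : Type*} [Field F] [Fintype F] [DecidableEq F] (mA nA mB nB : ℕ)
    (HA : Matrix (Fin mA) (Fin nA) F) (HB : Matrix (Fin mB) (Fin nB) F)
    (hA : ∃ v : Fin nA → F, v ≠ 0 ∧ HA.mulVec v = 0)
    (hB : ∃ v : Fin nB → F, v ≠ 0 ∧ HB.mulVec v = 0)
    (hAT : ∃ v : Fin mA → F, v ≠ 0 ∧ HAᵀ.mulVec v = 0)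
    (hBT : ∃ v : Fin mB → F, v ≠ 0 ∧ HBᵀ.mulVec v = 0)
    (HX : Matrix (Fin mA × Fin mB) ((Fin mA × Fin nB) ⊕ (Fin nA × Fin mB)) F)
    (HZ : Matrix (Fin nA × Fin nB) ((Fin mA × Fin nB) ⊕ (Fin nA × Fin mB)) F)
    (hHX : HX = fromCols ((1 : Matrix (Fin mA) (Fin mA) F) ⊗ₖ HB)
        (HA ⊗ₖ (1 : Matrix (Fin mB) (Fin mB) F)))
    (hHZ : HZ = fromCols (HAᵀ ⊗ₖ (1 : Matrix (Fin nB) (Fin nB) F))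
        (-((1 : Matrix (Fin nA) (Fin nA) F) ⊗ₖ HBᵀ)))
    (dA dB dAT dBT : ℕ)
    (hdA : dA = sInf {w : ℕ | ∃ v : Fin nA → F, HA.mulVec v = 0 ∧ v ≠ 0 ∧ hammingNorm v = w})
    (hdB : dB = sInf {w : ℕ | ∃ v : Fin nB → F, HB.mulVec v = 0 ∧ v ≠ 0 ∧ hammingNorm v = w})
    (hdAT : dAT = sInf {w : ℕ | ∃ v : Fin mA → F, HAᵀ.mulVec v = 0 ∧ v ≠ 0 ∧ hammingNorm v = w})
    (hdBT : dBT = sInf {w : ℕ | ∃ v : Fin mB → F, HBᵀ.mulVec v = 0 ∧ v ≠ 0 ∧ hammingNorm v = w}) :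
    (∀ w : ((Fin mA × Fin nB) ⊕ (Fin nA × Fin mB)) → F,
      HX.mulVec w = 0 → hammingNorm w < min dA dB →
        w ∈ Submodule.span F (Set.range HZ)) ∧
    (∀ w : ((Fin mA × Fin nB) ⊕ (Fin nA × Fin mB)) → F,
      HZ.mulVec w = 0 → hammingNorm w < min dAT dBT →
        w ∈ Submodule.span F (Set.range HX)) := by
  classical
  constructor
  · intro w hw hwlt
    set M : Matrix (Fin mA) (Fin nB) F := Matrix.of fun a j => w (Sum.inl (a, j)) with hM
    set N : Matrix (Fin nA) (Fin mB) F := Matrix.of fun i b => w (Sum.inr (i, b)) with hN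
    have h0 : ∀ a b, (∑ j, HB b j * w (Sum.inl (a, j)))
        + (∑ i, HA a i * w (Sum.inr (i, b))) = 0 := by
      intro a b
      have h := congr_fun hw (a, b)
      rw [hHX] at h
      simpa only [Matrix.mulVec, dotProduct, Fintype.sum_sum_type, Fintype.sum_prod_type,
        Matrix.fromCols_apply_inl, Matrix.fromCols_apply_inr, Matrix.kroneckerMap_apply,
        Matrix.one_apply, ite_mul, one_mul, zero_mul, mul_ite, mul_zero, mul_one,
        Finset.sum_ite_irrel, Finset.sum_const_zero, Finset.sum_neg_distrib, neg_zero, Finset.sum_ite_eq, Finset.sum_ite_eq', Finset.mem_univ, if_true, Pi.zero_apply] using h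
    have heq : M * HBᵀ + HA * N = 0 := by
      ext a b
      have h := h0 a b
      simp only [Matrix.add_apply, Matrix.mul_apply, Matrix.transpose_apply, Matrix.zero_apply,
        hM, hN, Matrix.of_apply]
      rw [← h]
      congr 1
      exact Finset.sum_congr rfl fun j _ => mul_comm _ _
    have hwA : hammingNorm w < dA := lt_of_lt_of_le hwlt (min_le_left _ _)
    have hwB : hammingNorm w < dB := lt_of_lt_of_le hwlt (min_le_right _ _)
    have hA' : ∀ v : Fin nA → F, HA.mulVec v = 0 → (∀ i, v i ≠ 0 → ∃ b, N i b ≠ 0) → v = 0 := by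
      intro v hker hsupp
      by_contra hv
      have h1 : dA ≤ hammingNorm v := hdA ▸ Nat.sInf_le ⟨v, hker, hv, rfl⟩
      have h2 : hammingNorm v ≤ hammingNorm w := by
        refine hgp_supp_le v w (fun i b => Sum.inr (i, b)) ?_ ?_ hv
        · intro i b i' b' h
          exact ((by simpa [Prod.ext_iff] using h : i = i' ∧ b = b')).1
        · intro i hi
          obtain ⟨b, hb⟩ := hsupp i hi
          exact ⟨b, by simpa [hN] using hb⟩
      omega
    have hB' : ∀ v : Fin nB → F, HB.mulVec v = 0 → (∀ j, v j ≠ 0 → ∃ a, M a j ≠ 0) → v = 0 := by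
      intro v hker hsupp
      by_contra hv
      have h1 : dB ≤ hammingNorm v := hdB ▸ Nat.sInf_le ⟨v, hker, hv, rfl⟩
      have h2 : hammingNorm v ≤ hammingNorm w := by
        refine hgp_supp_le v w (fun j a => Sum.inl (a, j)) ?_ ?_ hv
        · intro j a j' a' h
          exact ((by simpa [Prod.ext_iff] using h : a = a' ∧ j = j')).2
        · intro j hj
          obtain ⟨a, ha⟩ := hsupp j hj
          exact ⟨a, by simpa [hM] using ha⟩
      omega
    obtain ⟨C, hC1, hC2⟩ := hgp_core HA HB M N heq hA' hB'
    rw [show Set.range HZ = Set.range HZ.row from rfl, ← range_vecMulLinear]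
    refine ⟨fun p => C p.1 p.2, ?_⟩
    funext s
    rw [Matrix.vecMulLinear_apply]
    match s with
    | Sum.inl (a, j) =>
      have hC := congr_fun (congr_fun hC1 a) j
      rw [hHZ]
      simp only [Matrix.vecMul, dotProduct, Fintype.sum_prod_type,
        Matrix.fromCols_apply_inl, Matrix.kroneckerMap_apply, Matrix.transpose_apply,
        Matrix.one_apply, mul_ite, mul_one, mul_zero, Finset.sum_ite_irrel, Finset.sum_const_zero, Finset.sum_neg_distrib, neg_zero, Finset.sum_ite_eq, Finset.sum_ite_eq',
        Finset.mem_univ, if_true]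
      rw [show w (Sum.inl (a, j)) = M a j from rfl, ← hC, Matrix.mul_apply]
      exact Finset.sum_congr rfl fun x _ => mul_comm _ _
    | Sum.inr (i, b) =>
      have hC := congr_fun (congr_fun hC2 i) b
      rw [hHZ]
      simp only [Matrix.vecMul, dotProduct, Fintype.sum_prod_type,
        Matrix.fromCols_apply_inr, Matrix.neg_apply, Matrix.kroneckerMap_apply,
        Matrix.transpose_apply, Matrix.one_apply, ite_mul, one_mul, zero_mul, mul_ite, mul_neg,
        mul_zero, mul_one, Finset.sum_ite_irrel, Finset.sum_const_zero, Finset.sum_neg_distrib, neg_zero, Finset.sum_ite_eq, Finset.sum_ite_eq', Finset.mem_univ, if_true,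
        Finset.sum_neg_distrib]
      rw [show w (Sum.inr (i, b)) = N i b from rfl]
      have h2 : (∑ y, C i y * HB b y) = -(N i b) := by
        simpa only [Matrix.mul_apply, Matrix.transpose_apply, Matrix.neg_apply] using hC
      rw [h2, neg_neg]
  · intro w hw hwlt
    set M : Matrix (Fin mA) (Fin nB) F := Matrix.of fun a j => w (Sum.inl (a, j)) with hM
    set N : Matrix (Fin nA) (Fin mB) F := Matrix.of fun i b => w (Sum.inr (i, b)) with hN
    have h0 : ∀ x y, (∑ a, HA a x * w (Sum.inl (a, y)))
        + -(∑ b, HB b y * w (Sum.inr (x, b))) = 0 := by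
      intro x y
      have h := congr_fun hw (x, y)
      rw [hHZ] at h
      simpa only [Matrix.mulVec, dotProduct, Fintype.sum_sum_type, Fintype.sum_prod_type,
        Matrix.fromCols_apply_inl, Matrix.fromCols_apply_inr, Matrix.kroneckerMap_apply,
        Matrix.one_apply, Matrix.neg_apply, Matrix.transpose_apply, ite_mul, one_mul, zero_mul,
        mul_ite, mul_zero, mul_one, neg_mul, neg_zero, Finset.sum_ite_irrel, Finset.sum_const_zero, Finset.sum_neg_distrib, neg_zero, Finset.sum_ite_eq, Finset.sum_ite_eq',
        Finset.mem_univ, if_true, Pi.zero_apply] using h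
    have heq : Mᵀ * HAᵀᵀ + HBᵀ * (-Nᵀ) = 0 := by
      ext y x
      have h := h0 x y
      simp only [Matrix.add_apply, Matrix.mul_apply, Matrix.transpose_apply,
        Matrix.transpose_transpose, Matrix.neg_apply, Matrix.zero_apply, hM, hN, Matrix.of_apply]
      rw [← h]
      congr 1
      · exact Finset.sum_congr rfl fun a _ => mul_comm _ _
      · rw [← Finset.sum_neg_distrib]
        exact Finset.sum_congr rfl fun b _ => by ring
    have hwA : hammingNorm w < dAT := lt_of_lt_of_le hwlt (min_le_left _ _)
    have hwB : hammingNorm w < dBT := lt_of_lt_of_le hwlt (min_le_right _ _)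
    have hA' : ∀ v : Fin mB → F, HBᵀ.mulVec v = 0 →
        (∀ i, v i ≠ 0 → ∃ x, (-Nᵀ) i x ≠ 0) → v = 0 := by
      intro v hker hsupp
      by_contra hv
      have h1 : dBT ≤ hammingNorm v := hdBT ▸ Nat.sInf_le ⟨v, hker, hv, rfl⟩
      have h2 : hammingNorm v ≤ hammingNorm w := by
        refine hgp_supp_le v w (fun b x => Sum.inr (x, b)) ?_ ?_ hv
        · intro b x b' x' h
          exact ((by simpa [Prod.ext_iff] using h : x = x' ∧ b = b')).2
        · intro b hb
          obtain ⟨x, hx⟩ := hsupp b hb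
          refine ⟨x, ?_⟩
          simp only [Matrix.neg_apply, Matrix.transpose_apply, hN, Matrix.of_apply,
            neg_ne_zero] at hx
          exact hx
      omega
    have hB' : ∀ v : Fin mA → F, HAᵀ.mulVec v = 0 →
        (∀ j, v j ≠ 0 → ∃ a, Mᵀ a j ≠ 0) → v = 0 := by
      intro v hker hsupp
      by_contra hv
      have h1 : dAT ≤ hammingNorm v := hdAT ▸ Nat.sInf_le ⟨v, hker, hv, rfl⟩
      have h2 : hammingNorm v ≤ hammingNorm w := by
        refine hgp_supp_le v w (fun j a => Sum.inl (j, a)) ?_ ?_ hv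
        · intro j a j' a' h
          exact ((by simpa [Prod.ext_iff] using h : j = j' ∧ a = a')).1
        · intro j hj
          obtain ⟨a, ha⟩ := hsupp j hj
          refine ⟨a, ?_⟩
          simpa [hM] using ha
      omega
    obtain ⟨C, hC1, hC2⟩ := hgp_core HBᵀ HAᵀ Mᵀ (-Nᵀ) heq hA' hB'
    rw [Matrix.transpose_transpose, neg_neg] at hC2
    rw [show Set.range HX = Set.range HX.row from rfl, ← range_vecMulLinear]
    refine ⟨fun p => C p.2 p.1, ?_⟩
    funext s
    rw [Matrix.vecMulLinear_apply]
    match s with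
    | Sum.inl (a, j) =>
      have hC := congr_fun (congr_fun hC1 j) a
      rw [hHX]
      simp only [Matrix.vecMul, dotProduct, Fintype.sum_prod_type,
        Matrix.fromCols_apply_inl, Matrix.kroneckerMap_apply,
        Matrix.one_apply, ite_mul, one_mul, zero_mul, mul_ite, mul_one, mul_zero,
        Finset.sum_ite_irrel, Finset.sum_const_zero, Finset.sum_neg_distrib, neg_zero, Finset.sum_ite_eq, Finset.sum_ite_eq', Finset.mem_univ, if_true]
      rw [show w (Sum.inl (a, j)) = M a j from rfl]
      rw [show M a j = Mᵀ j a from rfl, ← hC, Matrix.mul_apply]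
      exact Finset.sum_congr rfl fun b _ => by
        simp only [Matrix.transpose_apply]; try ring
    | Sum.inr (i, b) =>
      have hC := congr_fun (congr_fun hC2 b) i
      rw [hHX]
      simp only [Matrix.vecMul, dotProduct, Fintype.sum_prod_type,
        Matrix.fromCols_apply_inr, Matrix.kroneckerMap_apply,
        Matrix.one_apply, ite_mul, one_mul, zero_mul, mul_ite, mul_one, mul_zero,
        Finset.sum_ite_irrel, Finset.sum_const_zero, Finset.sum_neg_distrib, neg_zero, Finset.sum_ite_eq, Finset.sum_ite_eq', Finset.mem_univ, if_true]
      rw [show w (Sum.inr (i, b)) = N i b from rfl]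
      rw [show N i b = Nᵀ b i from rfl, ← hC, Matrix.mul_apply]
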